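/- For a ≥ 1 and m ≥ 1, let Q be the 2×2 matrix m·[[2,a],[a,−2]], and let M = [[a_{2n−1}, a_{2n}],[a_{2n}, a_{2n+1}]] where n is a positive integer. Then (M + I)·Q^{−1} has all entries in ℤ if and only if n is odd and m divides a_n. -/

import Mathlib

private theorem myfib_add (a : ℤ) (f : ℕ → ℤ) (h0 : f 0 = 0) (h1 : f 1 = 1)
    (hrec : ∀ n, f (n + 2) = a * f (n + 1) + f n) :
    ∀ q p, f (p + q + 1) = f (p+1) * f (q+1) + f p * f q := by
  intro q
  induction q using Nat.twoStepInduction with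
  | zero => intro p; simp [h0, h1]
  | one =>
    intro p
    have h2 : f 2 = a := by rw [hrec 0]; simp [h0, h1]
    have := hrec p
    simp only [show p + 1 + 1 = p + 2 from rfl, this, h1, h2]
    ring
  | more q ih1 ih2 =>
    intro p
    have e1 : p + (q + 2) + 1 = (p + q + 1) + 2 := by ring
    have e2 : p + (q + 1) + 1 = (p + q + 1) + 1 := by ring
    have h3 : f (q + 2 + 1) = a * f (q + 2) + f (q + 1) := by
      have := hrec (q+1); rwa [show q+1+2 = q+2+1 from rfl] at this
    rw [e1, hrec (p+q+1), ← e2, ih2, ih1, h3, hrec q]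
    ring

private theorem mycassini (a : ℤ) (f : ℕ → ℤ) (h0 : f 0 = 0) (h1 : f 1 = 1)
    (hrec : ∀ n, f (n + 2) = a * f (n + 1) + f n) :
    ∀ k, f (k+1)^2 - a * f k * f (k+1) - f k ^ 2 = (-1 : ℤ)^k := by
  intro k
  induction k with
  | zero => simp [h0, h1]
  | succ k ih =>
    rw [show k+1+1 = k+2 from rfl, hrec k, pow_succ]
    linear_combination (-1 : ℤ) * ih

private theorem exists_int_eq_div_iff (d x : ℤ) (hd : d ≠ 0) :
    (∃ z : ℤ, ((x:ℚ)/(d:ℚ)) = z) ↔ d ∣ x := by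
  have hd' : (d:ℚ) ≠ 0 := by exact_mod_cast hd
  constructor
  · rintro ⟨z, hz⟩
    rw [div_eq_iff hd'] at hz
    exact ⟨z, by exact_mod_cast (mul_comm (z:ℚ) (d:ℚ) ▸ hz)⟩
  · rintro ⟨z, rfl⟩
    exact ⟨z, by push_cast; rw [mul_comm, mul_div_assoc, div_self hd', mul_one]⟩

theorem integrality_criterion_antisymplectic (a m : ℤ) (ha : 1 ≤ a) (hm : 1 ≤ m)
    (f : ℕ → ℤ) (h0 : f 0 = 0) (h1 : f 1 = 1)
    (hrec : ∀ n, f (n + 2) = a * f (n + 1) + f n) (n : ℕ) (hn : 0 < n) :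
    (∀ i j : Fin 2,
        ∃ z : ℤ,
          (((!![(f (2 * n - 1) : ℚ), (f (2 * n) : ℚ);
                (f (2 * n) : ℚ), (f (2 * n + 1) : ℚ)] + 1) *
              ((m : ℚ) • !![2, (a : ℚ); (a : ℚ), -2])⁻¹) i j) = (z : ℚ)) ↔
      (Odd n ∧ m ∣ f n) := by
  obtain ⟨k, rfl⟩ : ∃ k, n = k + 1 := ⟨n - 1, (Nat.succ_pred_eq_of_pos hn).symm⟩
  have hr : f (k+2) = a * f (k+1) + f k := hrec k
  have hcas : f (k+1)^2 - a * f k * f (k+1) - f k ^ 2 = (-1:ℤ)^k :=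
    mycassini a f h0 h1 hrec k
  -- values of f at 2n-1, 2n, 2n+1
  have h2n1 : f (2*(k+1) - 1) = f (k+1)^2 + f k ^2 := by
    have := myfib_add a f h0 h1 hrec k k
    rw [show 2*(k+1) - 1 = k + k + 1 by omega, this]; ring
  have h2n : f (2*(k+1)) = f (k+1) * (f (k+2) + f k) := by
    have := myfib_add a f h0 h1 hrec k (k+1)
    rw [show 2*(k+1) = (k+1) + k + 1 by omega, this,
      show k+1+1 = k+2 from rfl]; ring
  have h2n2 : f (2*(k+1) + 1) = f (k+2)^2 + f (k+1)^2 := by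
    have := myfib_add a f h0 h1 hrec (k+1) (k+1)
    rw [show 2*(k+1) + 1 = (k+1) + (k+1) + 1 by omega, this,
      show k+1+1 = k+2 from rfl]; ring
  -- the common denominator
  have hA4 : (0:ℤ) < a^2 + 4 := by positivity
  have hm0 : (0:ℤ) < m := hm
  have hD : m * (a^2 + 4) ≠ 0 := by positivity
  have hmQ : (m:ℚ) ≠ 0 := by exact_mod_cast hm0.ne'
  have hA4Q : (a:ℚ)^2 + 4 ≠ 0 := by positivity
  -- numerators
  set N11 : ℤ := 2*(f (2*(k+1) - 1) + 1) + a * f (2*(k+1)) with hN11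
  set N12 : ℤ := a*(f (2*(k+1) - 1) + 1) - 2 * f (2*(k+1)) with hN12
  set N21 : ℤ := 2 * f (2*(k+1)) + a*(f (2*(k+1) + 1) + 1) with hN21
  set N22 : ℤ := a * f (2*(k+1)) - 2*(f (2*(k+1) + 1) + 1) with hN22
  -- the inverse matrix
  have hinv : ((m : ℚ) • !![2, (a : ℚ); (a : ℚ), -2])⁻¹
      = !![2 / ((m:ℚ)*((a:ℚ)^2+4)), (a:ℚ) / ((m:ℚ)*((a:ℚ)^2+4));
           (a:ℚ) / ((m:ℚ)*((a:ℚ)^2+4)), -2 / ((m:ℚ)*((a:ℚ)^2+4))] := by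
    apply Matrix.inv_eq_right_inv
    ext i j
    fin_cases i <;> fin_cases j <;>
      simp [Matrix.mul_apply, Fin.sum_univ_two, Matrix.one_apply] <;>
      field_simp <;> ring
  have hmat : (!![(f (2 * (k+1) - 1) : ℚ), (f (2 * (k+1)) : ℚ);
                (f (2 * (k+1)) : ℚ), (f (2 * (k+1) + 1) : ℚ)] + 1) *
              ((m : ℚ) • !![2, (a : ℚ); (a : ℚ), -2])⁻¹
      = !![(N11:ℚ)/((m*(a^2+4) : ℤ) : ℚ), (N12:ℚ)/((m*(a^2+4) : ℤ) : ℚ);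
           (N21:ℚ)/((m*(a^2+4) : ℤ) : ℚ), (N22:ℚ)/((m*(a^2+4) : ℤ) : ℚ)] := by
    rw [hinv]
    have hDQ : ((m*(a^2+4) : ℤ) : ℚ) = (m:ℚ)*((a:ℚ)^2+4) := by push_cast; ring
    ext i j
    fin_cases i <;> fin_cases j <;>
      simp only [hDQ, hN11, hN12, hN21, hN22, Matrix.mul_apply, Fin.sum_univ_two,
        Matrix.add_apply, Matrix.one_apply, Matrix.cons_val', Matrix.cons_val_zero,
        Matrix.cons_val_one, Matrix.head_cons, Matrix.head_fin_const,
        Matrix.empty_val', Matrix.cons_val_fin_one, Fin.zero_eq_one_iff,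
        Fin.one_eq_zero_iff, if_true, if_false, Nat.succ_ne_self, ne_eq,
        OfNat.ofNat_ne_one, not_false_eq_true, if_neg, if_pos, eq_self_iff_true] <;>
      norm_num <;> push_cast <;> field_simp <;> ring
  rw [hmat]
  simp only [Fin.forall_fin_two, Matrix.of_apply, Matrix.cons_val', Matrix.cons_val_zero,
    Matrix.cons_val_one, Matrix.head_cons, Matrix.head_fin_const, Matrix.empty_val',
    Matrix.cons_val_fin_one]
  rw [exists_int_eq_div_iff _ _ hD, exists_int_eq_div_iff _ _ hD,
    exists_int_eq_div_iff _ _ hD, exists_int_eq_div_iff _ _ hD]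
  -- closed forms of the numerators
  have e11 : N11 = (a^2+4) * f (k+1)^2 + 2 - 2 * (-1:ℤ)^k := by
    rw [hN11, h2n1, h2n]
    linear_combination (a * f (k+1)) * hr - 2 * hcas
  have e12 : N12 = -((a^2+4) * (f k * f (k+1))) + a - a * (-1:ℤ)^k := by
    rw [hN12, h2n1, h2n]
    linear_combination (-2 * f (k+1)) * hr - a * hcas
  have e21 : N21 = (a^2+4) * (f (k+1) * f (k+2)) + a - a * (-1:ℤ)^k := by
    rw [hN21, h2n, h2n2]
    linear_combination (2 * f (k+1) + a * f (k+2) + a * (a * f (k+1) + f k) - (a^2+4) * f (k+1)) * hr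
      - a * hcas
  have e22 : N22 = -((a^2+4) * f (k+1)^2) - 2 + 2 * (-1:ℤ)^k := by
    rw [hN22, h2n, h2n2]
    linear_combination (a * f (k+1) - 2 * f (k+2) - 2 * (a * f (k+1) + f k)) * hr
      + 2 * hcas
  constructor
  · rintro ⟨⟨d11, d12⟩, d21, d22⟩
    -- k must be even
    have hkeven : Even k := by
      by_contra hodd
      have hε : (-1:ℤ)^k = -1 := Odd.neg_one_pow (Nat.not_even_iff_odd.mp hodd)
      rw [e11, hε] at d11
      have hdvd4 : (a^2+4 : ℤ) ∣ 4 := by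
        have h1' : (a^2+4 : ℤ) ∣ (a^2+4) * f (k+1)^2 + 2 - 2 * (-1) :=
          dvd_trans (Dvd.intro_left m rfl) d11
        have h2' : (a^2+4 : ℤ) ∣ (a^2+4) * f (k+1)^2 := Dvd.intro _ rfl
        have := dvd_sub h1' h2'
        have e : (a^2+4) * f (k+1)^2 + 2 - 2 * (-1) - (a^2+4) * f (k+1)^2 = (4:ℤ) := by ring
        rwa [e] at this
      have := Int.le_of_dvd (by norm_num) hdvd4
      nlinarith
    have hε : (-1:ℤ)^k = 1 := Even.neg_one_pow hkeven
    rw [e11, hε] at d11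
    rw [e12, hε] at d12
    -- m ∣ f(k+1)^2
    have hq2 : m ∣ f (k+1)^2 := by
      obtain ⟨c, hc⟩ := d11
      refine ⟨(a^2+4) * c / (a^2+4), ?_⟩
      have h' : (a^2+4) * f (k+1)^2 = (a^2+4) * (m * c) := by linarith [hc]
      have := mul_left_cancel₀ hA4.ne' h'
      rw [this]
      congr 1
      rw [Int.mul_ediv_cancel_left _ hA4.ne']
    -- m ∣ f k * f (k+1)
    have hpq : m ∣ f k * f (k+1) := by
      obtain ⟨c, hc⟩ := d12
      refine ⟨-c, ?_⟩
      have h' : (a^2+4) * (f k * f (k+1)) = (a^2+4) * (m * (-c)) := by linarith [hc]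
      exact mul_left_cancel₀ hA4.ne' h'
    -- conclude m ∣ f (k+1)
    have hq : m ∣ f (k+1) := by
      have hiden : f (k+1) = f (k+1) * f (k+1)^2
          - a * f (k+1) * (f k * f (k+1)) - f k * (f k * f (k+1)) := by
        have hc1 : f (k+1)^2 - a * f k * f (k+1) - f k ^ 2 = 1 := by
          rw [hcas, hε]
        linear_combination (-(f (k+1))) * hc1
      rw [hiden]
      exact dvd_sub (dvd_sub (hq2.mul_left _) (hpq.mul_left _)) (hpq.mul_left _)
    exact ⟨Even.add_one hkeven, hq⟩
  · rintro ⟨hodd, hdvd⟩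
    have hkeven : Even k := by
      rcases hodd with ⟨t, ht⟩
      exact ⟨t, by omega⟩
    have hε : (-1:ℤ)^k = 1 := Even.neg_one_pow hkeven
    obtain ⟨c, hc⟩ := hdvd
    refine ⟨⟨⟨m * c^2, ?_⟩, ⟨-(f k * c), ?_⟩⟩, ⟨f (k+2) * c, ?_⟩, ⟨-(m * c^2), ?_⟩⟩
    · rw [e11, hε, hc]; ring
    · rw [e12, hε, hc]; ring
    · rw [e21, hε, hc]; ring
    · rw [e22, hε, hc]; ring
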